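/- Let k ≥ 1 and suppose ℂ^k contains a SIC-POVM. Then for every unit vector a ∈ ℂ^k and every real ε with 0 ≤ ε ≤ (k+1)/(2k), the matrix P_sym^{k,2} − ε·(a a^*) ⊗ (a a^*) ∈ M_k(ℂ) ⊗ M_k(ℂ) ≅ M_{k²}(ℂ) is separable. -/

import Mathlib

open Matrix Finset
open scoped Kronecker

/-- The flip operator on ℂ^k ⊗ ℂ^k. -/
noncomputable def flipOp (k : ℕ) : Matrix (Fin k × Fin k) (Fin k × Fin k) ℂ :=
  Matrix.of fun p q => if p.1 = q.2 ∧ p.2 = q.1 then 1 else 0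

/-- Orthogonal projection onto the symmetric subspace of ℂ^k ⊗ ℂ^k. -/
noncomputable def psym (k : ℕ) : Matrix (Fin k × Fin k) (Fin k × Fin k) ℂ :=
  (1 / 2 : ℂ) • (1 + flipOp k)

/-- Separability of a matrix in M_k(ℂ) ⊗ M_k(ℂ) ≅ M_{k²}(ℂ). -/
def Separable {k : ℕ} (δ : Matrix (Fin k × Fin k) (Fin k × Fin k) ℂ) : Prop :=
  ∃ (N : ℕ) (x y : Fin N → Fin k → ℂ),
    δ = ∑ i, (Matrix.vecMulVec (x i) (star (x i))) ⊗ₖ (Matrix.vecMulVec (y i) (star (y i)))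

/-- ℂ^k contains a SIC-POVM: k² unit vectors with pairwise squared overlaps 1/(k+1). -/
def HasSICPOVM (k : ℕ) : Prop :=
  ∃ v : Fin (k ^ 2) → Fin k → ℂ,
    (∀ i, ∑ a, Complex.normSq (v i a) = 1) ∧
    ∀ i j, i ≠ j → ‖∑ a, star (v i a) * v j a‖ ^ 2 = 1 / ((k : ℝ) + 1)

lemma mul_flipOp {k : ℕ} (A : Matrix (Fin k × Fin k) (Fin k × Fin k) ℂ) (p q) :
    (A * flipOp k) p q = A p (q.2, q.1) := by
  simp only [mul_apply, flipOp, of_apply]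
  rw [Fintype.sum_prod_type]
  simp [ite_and, eq_comm]

lemma flipOp_mul {k : ℕ} (A : Matrix (Fin k × Fin k) (Fin k × Fin k) ℂ) (p q) :
    (flipOp k * A) p q = A (p.2, p.1) q := by
  simp only [mul_apply, flipOp, of_apply]
  rw [Fintype.sum_prod_type]
  simp [ite_and]

lemma flipOp_mul_flipOp (k : ℕ) : flipOp k * flipOp k = 1 := by
  ext p q
  rw [mul_flipOp]
  simp [flipOp, one_apply, Prod.ext_iff, and_comm]

lemma flipOp_conjTranspose (k : ℕ) : (flipOp k)ᴴ = flipOp k := by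
  ext p q
  simp only [flipOp, conjTranspose_apply, of_apply]
  have hiff : (p.1 = q.2 ∧ p.2 = q.1) ↔ (q.1 = p.2 ∧ q.2 = p.1) := by
    constructor <;> rintro ⟨h1, h2⟩ <;> exact ⟨h2.symm, h1.symm⟩
  rw [if_congr hiff.symm rfl rfl]
  split <;> simp

-- rank-one lemmas
lemma vmv_mul {k : ℕ} (x y z w : Fin k → ℂ) :
    vecMulVec x (star y) * vecMulVec z (star w)
      = (star y ⬝ᵥ z) • vecMulVec x (star w) := by
  ext a b
  simp only [mul_apply, vecMulVec_apply, Matrix.smul_apply, dotProduct, smul_eq_mul, Finset.sum_mul,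
    Finset.mul_sum]
  exact Finset.sum_congr rfl (by intros; ring)

lemma trace_vmv {k : ℕ} (x y : Fin k → ℂ) :
    trace (vecMulVec x (star y)) = star y ⬝ᵥ x := by
  simp [Matrix.trace, Matrix.diag, vecMulVec_apply, dotProduct, mul_comm]

lemma vmv_conjTranspose {k : ℕ} (x : Fin k → ℂ) :
    (vecMulVec x (star x))ᴴ = vecMulVec x (star x) := by
  ext a b
  simp [conjTranspose_apply, vecMulVec_apply, mul_comm]

lemma vmv_kron_mul_flipOp {k : ℕ} (x : Fin k → ℂ) :
    (vecMulVec x (star x) ⊗ₖ vecMulVec x (star x)) * flipOp k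
      = vecMulVec x (star x) ⊗ₖ vecMulVec x (star x) := by
  ext p q
  rw [mul_flipOp]
  simp only [kroneckerMap_apply, vecMulVec_apply]
  ring

lemma flipOp_mul_vmv_kron {k : ℕ} (x : Fin k → ℂ) :
    flipOp k * (vecMulVec x (star x) ⊗ₖ vecMulVec x (star x))
      = vecMulVec x (star x) ⊗ₖ vecMulVec x (star x) := by
  ext p q
  rw [flipOp_mul]
  simp only [kroneckerMap_apply, vecMulVec_apply]
  ring

lemma kron_conjTranspose {k : ℕ} (A B : Matrix (Fin k) (Fin k) ℂ) :
    (A ⊗ₖ B)ᴴ = Aᴴ ⊗ₖ Bᴴ := by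
  ext p q
  simp [conjTranspose_apply, kroneckerMap_apply]

lemma trace_flipOp (k : ℕ) : trace (flipOp k) = (k : ℂ) := by
  simp only [Matrix.trace, Matrix.diag, flipOp, of_apply]
  rw [Fintype.sum_prod_type]
  simp [and_comm, eq_comm]

lemma trace_psym (k : ℕ) : trace (psym k) = ((k^2 + k : ℕ) : ℂ) / 2 := by
  simp [psym, trace_smul, trace_add, trace_one, trace_flipOp]
  ring

lemma eq_zero_of_trace_CT_mul_self {n : Type*} [Fintype n] [DecidableEq n]
    (M : Matrix n n ℂ) (h : trace (Mᴴ * M) = 0) : M = 0 := by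
  have key : ∑ q : n, ∑ p : n, Complex.normSq (M p q) = 0 := by
    have h2 : trace (Mᴴ * M) = ((∑ q : n, ∑ p : n, Complex.normSq (M p q) : ℝ) : ℂ) := by
      simp only [Matrix.trace, Matrix.diag, mul_apply, conjTranspose_apply]
      push_cast
      refine Finset.sum_congr rfl fun q _ => Finset.sum_congr rfl fun p _ => ?_
      rw [Complex.star_def, mul_comm, Complex.mul_conj]
    rw [h2] at h
    exact_mod_cast h
  ext p q
  have h3 : ∀ q' ∈ Finset.univ (α := n), (0:ℝ) ≤ ∑ p : n, Complex.normSq (M p q') :=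
    fun q' _ => Finset.sum_nonneg fun p _ => Complex.normSq_nonneg _
  have h4 := (Finset.sum_eq_zero_iff_of_nonneg h3).mp key q (Finset.mem_univ q)
  have h5 := (Finset.sum_eq_zero_iff_of_nonneg
    (fun p' _ => Complex.normSq_nonneg (M p' q))).mp h4 p (Finset.mem_univ p)
  simpa using Complex.normSq_eq_zero.mp h5

lemma sic_two_design {k : ℕ} (hk : 1 ≤ k) (w : Fin (k ^ 2) → Fin k → ℂ)
    (h1 : ∀ i, ∑ a, Complex.normSq (w i a) = 1)
    (h2 : ∀ i j, i ≠ j → ‖∑ a, star (w i a) * w j a‖ ^ 2 = 1 / ((k : ℝ) + 1)) :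
    (∑ i, vecMulVec (w i) (star (w i)) ⊗ₖ vecMulVec (w i) (star (w i)))
      = (2 * k / ((k : ℂ) + 1)) • psym k := by
  set P : Fin (k ^ 2) → Matrix (Fin k) (Fin k) ℂ := fun i => vecMulVec (w i) (star (w i)) with hP
  set S : Matrix (Fin k × Fin k) (Fin k × Fin k) ℂ := ∑ i, P i ⊗ₖ P i with hS
  set c : ℂ := 2 * k / ((k : ℂ) + 1) with hc
  have hk1 : ((k : ℂ) + 1) ≠ 0 := by
    intro h
    have := congrArg Complex.re h
    simp at this
    linarith [Nat.cast_nonneg (α := ℝ) k]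
  have hgii : ∀ i, star (w i) ⬝ᵥ w i = 1 := by
    intro i
    have : star (w i) ⬝ᵥ w i = ((∑ a, Complex.normSq (w i a) : ℝ) : ℂ) := by
      simp only [dotProduct, Pi.star_apply]
      push_cast
      refine Finset.sum_congr rfl fun a _ => ?_
      rw [Complex.star_def, mul_comm, Complex.mul_conj]
    rw [this, h1 i]; norm_num
  have hgij : ∀ i j, i ≠ j →
      (star (w i) ⬝ᵥ w j) * (star (w j) ⬝ᵥ w i) = ((1 / ((k:ℝ)+1) : ℝ) : ℂ) := by
    intro i j hij
    have hs : star (w j) ⬝ᵥ w i = star (star (w i) ⬝ᵥ w j) := by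
      rw [star_dotProduct]
    rw [hs, Complex.star_def, Complex.mul_conj]
    norm_cast
    rw [← Complex.sq_norm]
    simpa [dotProduct] using h2 i j hij
  have htrPP : ∀ i j, trace (P i * P j) = (star (w i) ⬝ᵥ w j) * (star (w j) ⬝ᵥ w i) := by
    intro i j
    rw [hP]
    simp only
    rw [vmv_mul, trace_smul, trace_vmv, smul_eq_mul]
  have htrP : ∀ i, trace (P i) = 1 := fun i => by
    rw [hP]; simp only; rw [trace_vmv, hgii]
  have hSF : S * flipOp k = S := by
    rw [hS, Finset.sum_mul]
    exact Finset.sum_congr rfl fun i _ => vmv_kron_mul_flipOp (w i)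
  have hFS : flipOp k * S = S := by
    rw [hS, Finset.mul_sum]
    exact Finset.sum_congr rfl fun i _ => flipOp_mul_vmv_kron (w i)
  have hSpsym : S * psym k = S := by
    rw [psym, Matrix.mul_smul, mul_add, mul_one, hSF, smul_add, ← add_smul]
    norm_num
  have hpsymS : psym k * S = S := by
    rw [psym, smul_mul_assoc, add_mul, one_mul, hFS, smul_add, ← add_smul]
    norm_num
  have hpsym2 : psym k * psym k = psym k := by
    rw [psym, smul_mul_assoc, Matrix.mul_smul, smul_smul]
    have hmul : ((1 : Matrix (Fin k × Fin k) (Fin k × Fin k) ℂ) + flipOp k) * (1 + flipOp k)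
        = (2:ℂ) • (1 + flipOp k) := by
      rw [add_mul, one_mul, mul_add, mul_one, flipOp_mul_flipOp, two_smul]
      abel
    rw [hmul, smul_smul]
    norm_num
  have hSH : Sᴴ = S := by
    rw [hS, conjTranspose_sum]
    exact Finset.sum_congr rfl fun i _ => by
      rw [kron_conjTranspose, hP]
      simp only
      rw [vmv_conjTranspose]
  have hpsymH : (psym k)ᴴ = psym k := by
    rw [psym, conjTranspose_smul, conjTranspose_add, conjTranspose_one, flipOp_conjTranspose]
    norm_num
  have htrS : trace S = ((k^2 : ℕ) : ℂ) := by
    rw [hS, trace_sum]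
    simp_rw [trace_kronecker, htrP]
    simp
  have hk2 : 1 ≤ k^2 := Nat.one_le_pow _ _ (by omega)
  have htrSS : trace (S * S) = ((k^2:ℕ):ℂ) + (((k^2:ℕ):ℂ)^2 - ((k^2:ℕ):ℂ)) * (1/((k:ℂ)+1))^2 := by
    rw [hS, Finset.sum_mul, trace_sum]
    have hterm : ∀ i, trace ((P i ⊗ₖ P i) * S) = ∑ j, (trace (P i * P j))^2 := by
      intro i
      rw [hS, Finset.mul_sum, trace_sum]
      refine Finset.sum_congr rfl fun j _ => ?_
      rw [← mul_kronecker_mul, trace_kronecker, sq]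
    simp_rw [← hS, hterm]
    have key : ∀ i : Fin (k^2), ∑ j, (trace (P i * P j))^2
        = 1 + (((k^2:ℕ):ℂ) - 1) * (1/((k:ℂ)+1))^2 := by
      intro i
      rw [← Finset.add_sum_erase _ _ (Finset.mem_univ i), htrPP, hgii]
      have hsum : ∑ j ∈ Finset.univ.erase i, (trace (P i * P j))^2
          = (((k^2:ℕ):ℂ) - 1) * (1/((k:ℂ)+1))^2 := by
        rw [Finset.sum_congr rfl (fun j hj => by
          rw [htrPP, hgij i j fun h => (Finset.mem_erase.mp hj).1 h.symm])]
        rw [Finset.sum_const, Finset.card_erase_of_mem (Finset.mem_univ i), Finset.card_univ,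
          Fintype.card_fin, nsmul_eq_mul, Nat.cast_sub hk2]
        push_cast
        ring
      rw [hsum]
      norm_num
    simp_rw [key]
    rw [Finset.sum_const, Finset.card_univ, nsmul_eq_mul, Fintype.card_fin]
    push_cast
    ring
  set T : Matrix (Fin k × Fin k) (Fin k × Fin k) ℂ := S - c • psym k with hT
  have hcstar : star c = c := by
    rw [hc]
    simp [star_div₀, star_mul']
  have hTH : Tᴴ = T := by
    rw [hT, conjTranspose_sub, hSH, conjTranspose_smul, hpsymH, hcstar]
  have hpp : (c • psym k) * (c • psym k) = (c*c) • psym k := by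
    rw [smul_mul_assoc, Matrix.mul_smul, hpsym2, smul_smul]
  have hsp : S * (c • psym k) = c • S := by rw [Matrix.mul_smul, hSpsym]
  have hps : (c • psym k) * S = c • S := by rw [smul_mul_assoc, hpsymS]
  have htrTT : trace (Tᴴ * T) = 0 := by
    rw [hTH, hT, sub_mul, mul_sub, mul_sub, hpp, hsp, hps]
    rw [trace_sub, trace_sub, trace_sub, trace_smul, trace_smul,
      htrSS, htrS, trace_psym]
    simp only [smul_eq_mul]
    rw [hc]
    push_cast
    field_simp
    ring
  have hT0 : T = 0 := eq_zero_of_trace_CT_mul_self T htrTT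
  exact sub_eq_zero.mp hT0

lemma exists_isometry_map {k : ℕ} (hk : 1 ≤ k) (u a : EuclideanSpace ℂ (Fin k))
    (hu : ‖u‖ = 1) (ha : ‖a‖ = 1) :
    ∃ L : (EuclideanSpace ℂ (Fin k)) ≃ₗᵢ[ℂ] (EuclideanSpace ℂ (Fin k)), L u = a := by
  have hcard : Module.finrank ℂ (EuclideanSpace ℂ (Fin k)) = Fintype.card (Fin k) := by
    simp [finrank_euclideanSpace]
  set i0 : Fin k := ⟨0, hk⟩
  have hon : ∀ x : EuclideanSpace ℂ (Fin k), ‖x‖ = 1 →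
      Orthonormal ℂ (({i0} : Set (Fin k)).restrict (fun _ => x)) := by
    intro x hx
    constructor
    · intro i; exact hx
    · intro i j hij
      exact absurd (Subtype.ext (by
        have hi := i.2; have hj := j.2
        rw [Set.mem_singleton_iff] at hi hj
        rw [hi, hj])) hij
  obtain ⟨b, hb⟩ := (hon u hu).exists_orthonormalBasis_extension_of_card_eq hcard
  obtain ⟨b', hb'⟩ := (hon a ha).exists_orthonormalBasis_extension_of_card_eq hcard
  refine ⟨b.repr.trans b'.repr.symm, ?_⟩
  have hbu : b i0 = u := hb i0 rfl
  have hb'a : b' i0 = a := hb' i0 rfl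
  simp only [LinearIsometryEquiv.trans_apply]
  rw [← hbu, OrthonormalBasis.repr_self, OrthonormalBasis.repr_symm_single, hb'a]

lemma euclid_normSq_sum {k : ℕ} (x : EuclideanSpace ℂ (Fin k)) :
    ∑ a, Complex.normSq (x a) = ‖x‖ ^ 2 := by
  rw [EuclideanSpace.norm_eq, Real.sq_sqrt (by positivity)]
  exact Finset.sum_congr rfl fun a _ => by
    rw [← Complex.sq_norm]

lemma euclid_inner_sum {k : ℕ} (x y : EuclideanSpace ℂ (Fin k)) :
    (inner ℂ x y : ℂ) = ∑ a, star (x a) * y a := by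
  rw [PiLp.inner_apply]
  exact Finset.sum_congr rfl fun a _ => by rw [RCLike.inner_apply']; rfl

lemma vmv_real_smul {k : ℕ} (r : ℝ) (x : Fin k → ℂ) :
    vecMulVec ((r : ℂ) • x) (star ((r : ℂ) • x))
      = ((r ^ 2 : ℝ) : ℂ) • vecMulVec x (star x) := by
  ext a b
  simp only [vecMulVec_apply, Pi.smul_apply, Pi.star_apply, Matrix.smul_apply, star_smul,
    Complex.star_def, Complex.conj_ofReal, smul_eq_mul]
  push_cast
  ring

theorem psym_minus_product_separable_sic (k : ℕ) (hk : 1 ≤ k) (hsic : HasSICPOVM k)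
    (a : Fin k → ℂ) (ha : ∑ i, Complex.normSq (a i) = 1)
    (ε : ℝ) (hε0 : 0 ≤ ε) (hε : ε ≤ ((k : ℝ) + 1) / (2 * k)) :
    Separable (psym k - (ε : ℂ) •
      ((Matrix.vecMulVec a (star a)) ⊗ₖ (Matrix.vecMulVec a (star a)))) := by
  obtain ⟨v, hv1, hv2⟩ := hsic
  have hk2 : 0 < k ^ 2 := by positivity
  set i0 : Fin (k ^ 2) := ⟨0, hk2⟩ with hi0
  -- view vectors in EuclideanSpace
  have hnorm1 : ∀ x : EuclideanSpace ℂ (Fin k), (∑ i, Complex.normSq (x i)) = 1 → ‖x‖ = 1 := by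
    intro x hx
    have h := euclid_normSq_sum x
    rw [hx] at h
    nlinarith [norm_nonneg x]
  obtain ⟨L, hL⟩ := exists_isometry_map hk (WithLp.toLp 2 (v i0))
    (WithLp.toLp 2 (a)) (hnorm1 _ (hv1 i0)) (hnorm1 _ ha)
  set w : Fin (k ^ 2) → Fin k → ℂ :=
    fun i => (L (WithLp.toLp 2 (v i))).ofLp with hwdef
  have hw0 : w i0 = a := congrArg WithLp.ofLp hL
  have hw1 : ∀ i, ∑ b, Complex.normSq (w i b) = 1 := by
    intro i
    calc ∑ b, Complex.normSq (w i b)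
        = ‖L (WithLp.toLp 2 (v i))‖ ^ 2 := euclid_normSq_sum _
      _ = ‖(WithLp.toLp 2 (v i))‖ ^ 2 := by rw [L.norm_map]
      _ = ∑ b, Complex.normSq (v i b) := (euclid_normSq_sum _).symm
      _ = 1 := hv1 i
  have hinner : ∀ i j, (∑ b, star (w i b) * w j b) = ∑ b, star (v i b) * v j b := by
    intro i j
    calc (∑ b, star (w i b) * w j b)
        = (inner ℂ (L (WithLp.toLp 2 (v i)))
            (L (WithLp.toLp 2 (v j))) : ℂ) := (euclid_inner_sum _ _).symm
      _ = (inner ℂ (WithLp.toLp 2 (v i))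
            (WithLp.toLp 2 (v j)) : ℂ) := L.inner_map_map _ _
      _ = ∑ b, star (v i b) * v j b := euclid_inner_sum _ _
  have hw2 : ∀ i j, i ≠ j →
      ‖∑ b, star (w i b) * w j b‖ ^ 2 = 1 / ((k : ℝ) + 1) := by
    intro i j hij
    rw [hinner]
    exact hv2 i j hij
  have hdesign := sic_two_design hk w hw1 hw2
  -- scalars
  have hk0 : ((k : ℂ)) ≠ 0 := Nat.cast_ne_zero.mpr (by omega)
  have hk1 : ((k : ℂ) + 1) ≠ 0 := by
    intro h
    have := congrArg Complex.re h
    simp at this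
    linarith [Nat.cast_nonneg (α := ℝ) k]
  set P : Fin (k ^ 2) → Matrix (Fin k) (Fin k) ℂ := fun i => vecMulVec (w i) (star (w i)) with hP
  have hpsym : psym k = (((k : ℂ) + 1) / (2 * k)) • ∑ i, P i ⊗ₖ P i := by
    rw [hdesign, smul_smul]
    have : (((k : ℂ) + 1) / (2 * k)) * (2 * k / ((k : ℂ) + 1)) = 1 := by
      field_simp
    rw [this, one_smul]
  set t : Fin (k ^ 2) → ℝ :=
    fun i => if i = i0 then ((k : ℝ) + 1) / (2 * k) - ε else ((k : ℝ) + 1) / (2 * k) with ht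
  have ht0 : ∀ i, 0 ≤ t i := by
    intro i
    rw [ht]
    by_cases h : i = i0 <;> simp [h]
    · linarith
    · positivity
  refine ⟨k ^ 2, fun i => (Real.sqrt (t i) : ℂ) • w i, w, ?_⟩
  have hterm : ∀ i, vecMulVec ((Real.sqrt (t i) : ℂ) • w i) (star ((Real.sqrt (t i) : ℂ) • w i))
      ⊗ₖ vecMulVec (w i) (star (w i)) = ((t i : ℝ) : ℂ) • (P i ⊗ₖ P i) := by
    intro i
    rw [vmv_real_smul, Real.sq_sqrt (ht0 i), hP, smul_kronecker]
  rw [Finset.sum_congr rfl fun i _ => hterm i]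
  have hQ : vecMulVec a (star a) = P i0 := by rw [hP, ← hw0]
  rw [hQ, hpsym]
  have split : ∀ i, ((t i : ℝ) : ℂ) • (P i ⊗ₖ P i)
      = (((k : ℂ) + 1) / (2 * k)) • (P i ⊗ₖ P i)
        - (if i = i0 then (ε : ℂ) • (P i ⊗ₖ P i) else 0) := by
    intro i
    rw [ht]
    by_cases h : i = i0 <;> simp only [h, if_true, if_false]
    · have hcast : ((((k:ℝ)+1)/(2*k) - ε : ℝ) : ℂ) = ((k:ℂ)+1)/(2*k) - (ε : ℂ) := by
        push_cast; ring
      rw [hcast, sub_smul]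
    · have hcast : ((((k:ℝ)+1)/(2*k) : ℝ) : ℂ) = ((k:ℂ)+1)/(2*k) := by
        push_cast; ring
      rw [hcast, sub_zero]
  rw [Finset.sum_congr rfl fun i _ => split i, Finset.sum_sub_distrib, ← Finset.smul_sum,
    Finset.sum_ite_eq' Finset.univ i0 (fun i => (ε : ℂ) • (P i ⊗ₖ P i))]
  simp
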